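/- Let v, θ, R, lat₀, lon₀, T be real numbers with R > 0, T > 0, and cos θ ≠ 0, and suppose cos(lat₀ + (v cos θ / R) t) > 0 for all t ∈ [0, T]. Define lat(t) = lat₀ + (v cos θ / R) t and lon(t) = lon₀ + tan θ · log( ((1 + sin(lat(t))) / cos(lat(t))) · (cos(lat₀) / (1 + sin(lat₀))) ). Then lat(0) = lat₀, lon(0) = lon₀, and for every t ∈ [0, T] the derivatives satisfy lat′(t) = (v cos θ)/R and lon′(t) = (v sin θ) / (R cos(lat(t))). That is, the stated closed-form coordinate update solves the equations of motion of a vessel moving with constant speed over ground v and constant course over ground θ on a sphere of radius R. -/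

import Mathlib

open Real

/-- **SOG/COG coordinate update solves the equations of motion** (Proposition 3.3):
for a vessel moving with constant speed over ground `v` and course over ground `θ`
on a sphere of radius `R > 0`, starting at `(lat₀, lon₀)`, as long as
`cos (lat t) > 0` on `[0, T]`, the closed-form functions
`lat t = lat₀ + (v cos θ / R) t` and
`lon t = lon₀ + tan θ · log( ((1 + sin (lat t))/cos (lat t)) · (cos lat₀/(1 + sin lat₀)) )`
satisfy `lat 0 = lat₀`, `lon 0 = lon₀`, `lat′(t) = v cos θ / R` and
`lon′(t) = v sin θ / (R cos (lat t))` for every `t ∈ [0, T]`. -/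
theorem sog_cog_coordinate_update
    (v θ R lat₀ lon₀ T : ℝ) (hR : 0 < R) (hT : 0 < T) (hθ : Real.cos θ ≠ 0)
    (lat lon : ℝ → ℝ)
    (hlat : ∀ t, lat t = lat₀ + v * Real.cos θ / R * t)
    (hlon : ∀ t, lon t = lon₀ + Real.tan θ *
      Real.log (((1 + Real.sin (lat t)) / Real.cos (lat t)) *
        (Real.cos lat₀ / (1 + Real.sin lat₀))))
    (hcos : ∀ t ∈ Set.Icc (0 : ℝ) T,
      0 < Real.cos (lat₀ + v * Real.cos θ / R * t)) :
    lat 0 = lat₀ ∧ lon 0 = lon₀ ∧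
      ∀ t ∈ Set.Icc (0 : ℝ) T,
        HasDerivAt lat (v * Real.cos θ / R) t ∧
        HasDerivAt lon (v * Real.sin θ / (R * Real.cos (lat t))) t := by
  have hRne : R ≠ 0 := ne_of_gt hR
  set k := v * Real.cos θ / R with hk
  have h0mem : (0:ℝ) ∈ Set.Icc (0:ℝ) T := ⟨le_refl _, hT.le⟩
  have hlat0 : lat 0 = lat₀ := by rw [hlat]; ring
  have hcos0 : 0 < Real.cos lat₀ := by
    have := hcos 0 h0mem; simpa using this
  have hsin0 : 0 < 1 + Real.sin lat₀ := by
    nlinarith [Real.sin_sq_add_cos_sq lat₀, Real.neg_one_le_sin lat₀]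
  have hlon0 : lon 0 = lon₀ := by
    rw [hlon, hlat0]
    have h1 : ((1 + Real.sin lat₀) / Real.cos lat₀) *
        (Real.cos lat₀ / (1 + Real.sin lat₀)) = 1 := by
      field_simp
    rw [h1, Real.log_one, mul_zero, add_zero]
  refine ⟨hlat0, hlon0, fun t ht => ?_⟩
  have hlatf : lat = fun t => lat₀ + k * t := funext hlat
  have hL : HasDerivAt lat k t := by
    rw [hlatf]
    simpa using ((hasDerivAt_id t).const_mul k).const_add lat₀
  set L := lat t with hLdef
  have hcosL : 0 < Real.cos L := by
    have := hcos t ht; rw [hLdef, hlat]; exact this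
  have hcosLne : Real.cos L ≠ 0 := ne_of_gt hcosL
  have hsinL : 0 < 1 + Real.sin L := by
    nlinarith [Real.sin_sq_add_cos_sq L, Real.neg_one_le_sin L]
  have hsinLne : (1 : ℝ) + Real.sin L ≠ 0 := ne_of_gt hsinL
  refine ⟨hL, ?_⟩
  -- build derivative of lon
  have hs : HasDerivAt (fun s => Real.sin (lat s)) (Real.cos L * k) t :=
    (Real.hasDerivAt_sin L).comp t hL
  have hc : HasDerivAt (fun s => Real.cos (lat s)) (-Real.sin L * k) t :=
    (Real.hasDerivAt_cos L).comp t hL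
  have hnum : HasDerivAt (fun s => 1 + Real.sin (lat s)) (Real.cos L * k) t :=
    hs.const_add 1
  have hdiv : HasDerivAt (fun s => (1 + Real.sin (lat s)) / Real.cos (lat s))
      ((Real.cos L * k * Real.cos L - (1 + Real.sin L) * (-Real.sin L * k)) /
        (Real.cos L) ^ 2) t := hnum.div hc hcosLne
  set c := Real.cos lat₀ / (1 + Real.sin lat₀) with hcdef
  have hcne : c ≠ 0 := by
    rw [hcdef]; exact div_ne_zero (ne_of_gt hcos0) (ne_of_gt hsin0)
  have hf : HasDerivAt (fun s => ((1 + Real.sin (lat s)) / Real.cos (lat s)) * c)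
      (((Real.cos L * k * Real.cos L - (1 + Real.sin L) * (-Real.sin L * k)) /
        (Real.cos L) ^ 2) * c) t := hdiv.mul_const c
  have hfne : ((1 + Real.sin L) / Real.cos L) * c ≠ 0 :=
    mul_ne_zero (div_ne_zero hsinLne hcosLne) hcne
  have hlog := (hf.log hfne).const_mul (Real.tan θ)
  have hlog' := hlog.const_add lon₀
  have hlonf : lon = fun s => lon₀ + Real.tan θ *
      Real.log (((1 + Real.sin (lat s)) / Real.cos (lat s)) * c) := funext hlon
  rw [hlonf]
  convert hlog' using 1
  case e'_4 => rfl
  case e'_5 => rfl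
  have key : Real.cos L * k * Real.cos L - (1 + Real.sin L) * (-Real.sin L * k)
      = k * (1 + Real.sin L) := by
    linear_combination k * Real.sin_sq_add_cos_sq L
  rw [key, Real.tan_eq_sin_div_cos, hcdef, hk]
  rw [show lat t = L from rfl]
  field_simp
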